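/- arXiv:1209.0443 — 4 statements merged into one kernel-verified Lean document; each statement's English description precedes it below -/
import Mathlib

section
/- For all a, b ∈ ℂ, the polynomial identity X·F₁(X)² − F₂(X)² = (X − 1)·F₃(X)² holds in ℂ[X], where F₁(X) = X² + (2a + 2b + a²)X + 2ab + b², F₂(X) = (2a+1)X² + (a² + 2ab + 2b)X + b², and F₃(X) = X² − (a² − 2b)X + b². Consequently φ(X) − 1 = (X−1)·(F₃(X)/F₂(X))² wherever F₂(X) ≠ 0, for the rational function φ(X) = X·F₁(X)²/F₂(X)². -/
open Polynomial

/-- For all `a, b ∈ ℂ`, we have `X·F₁(X)² − F₂(X)² = (X − 1)·F₃(X)²` in `ℂ[X]`, where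
`F₁(X) = X² + (2a + 2b + a²)X + 2ab + b²`, `F₂(X) = (2a+1)X² + (a² + 2ab + 2b)X + b²`,
`F₃(X) = X² − (a² − 2b)X + b²`.  Consequently `φ(X) − 1 = (X−1)·(F₃(X)/F₂(X))²` wherever
`F₂(X) ≠ 0`, for `φ(X) = X·F₁(X)²/F₂(X)²`. -/
theorem key_polynomial_identity (a b : ℂ) :
    (X * (X ^ 2 + C (2 * a + 2 * b + a ^ 2) * X + C (2 * a * b + b ^ 2)) ^ 2
        - (C (2 * a + 1) * X ^ 2 + C (a ^ 2 + 2 * a * b + 2 * b) * X + C (b ^ 2)) ^ 2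
      = (X - 1) * (X ^ 2 - C (a ^ 2 - 2 * b) * X + C (b ^ 2)) ^ 2) ∧
    ∀ x : ℂ, (2 * a + 1) * x ^ 2 + (a ^ 2 + 2 * a * b + 2 * b) * x + b ^ 2 ≠ 0 →
      x * (x ^ 2 + (2 * a + 2 * b + a ^ 2) * x + 2 * a * b + b ^ 2) ^ 2
          / ((2 * a + 1) * x ^ 2 + (a ^ 2 + 2 * a * b + 2 * b) * x + b ^ 2) ^ 2 - 1
        = (x - 1) * ((x ^ 2 - (a ^ 2 - 2 * b) * x + b ^ 2)
          / ((2 * a + 1) * x ^ 2 + (a ^ 2 + 2 * a * b + 2 * b) * x + b ^ 2)) ^ 2 := by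
  constructor
  · apply Polynomial.funext
    intro x
    simp only [eval_mul, eval_add, eval_sub, eval_pow, eval_C, eval_X, eval_one]
    ring
  · intro x hx
    rw [div_pow, div_sub_one (pow_ne_zero 2 hx), mul_div_assoc']
    ring
end

section
/- For all a, b ∈ ℂ, the polynomial identity (F₁(X) + 2X·F₁′(X))·F₂(X) − 2X·F₁(X)·F₂′(X) = F₃(X)·F₄(X) holds in ℂ[X]. Consequently, at every point x with F₂(x) ≠ 0, the derivative of φ(X) = X·F₁(X)²/F₂(X)² satisfies φ′(x) = F₁(x)·F₃(x)·F₄(x)/F₂(x)³. -/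
open Polynomial

/-- `F₁(X) = X² + (2a + 2b + a²)X + 2ab + b²` as a polynomial over `ℂ`. -/
noncomputable def F₁ (a b : ℂ) : Polynomial ℂ :=
  X ^ 2 + C (2 * a + 2 * b + a ^ 2) * X + C (2 * a * b + b ^ 2)

/-- `F₂(X) = (2a+1)X² + (a² + 2ab + 2b)X + b²` as a polynomial over `ℂ`. -/
noncomputable def F₂ (a b : ℂ) : Polynomial ℂ :=
  C (2 * a + 1) * X ^ 2 + C (a ^ 2 + 2 * a * b + 2 * b) * X + C (b ^ 2)

/-- `F₃(X) = X² − (a² − 2b)X + b²` as a polynomial over `ℂ`. -/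
noncomputable def F₃ (a b : ℂ) : Polynomial ℂ :=
  X ^ 2 - C (a ^ 2 - 2 * b) * X + C (b ^ 2)

/-- `F₄(X) = (2a+1)X² + (2b − 2ab − 2a − a²)X + b² + 2ab` as a polynomial over `ℂ`. -/
noncomputable def F₄ (a b : ℂ) : Polynomial ℂ :=
  C (2 * a + 1) * X ^ 2 + C (2 * b - 2 * a * b - 2 * a - a ^ 2) * X + C (b ^ 2 + 2 * a * b)

/-- For all `a, b ∈ ℂ`, the identity
`(F₁ + 2X·F₁′)·F₂ − 2X·F₁·F₂′ = F₃·F₄` holds in `ℂ[X]`, and consequently at every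
`x` with `F₂(x) ≠ 0` the derivative of `φ(X) = X·F₁(X)²/F₂(X)²` is
`φ′(x) = F₁(x)·F₃(x)·F₄(x)/F₂(x)³`. -/
theorem derivative_factorization (a b : ℂ) :
    ((F₁ a b + 2 * X * derivative (F₁ a b)) * F₂ a b
        - 2 * X * F₁ a b * derivative (F₂ a b) = F₃ a b * F₄ a b) ∧
    ∀ x : ℂ, (F₂ a b).eval x ≠ 0 →
      HasDerivAt (fun t : ℂ => t * ((F₁ a b).eval t) ^ 2 / ((F₂ a b).eval t) ^ 2)
        ((F₁ a b).eval x * (F₃ a b).eval x * (F₄ a b).eval x / ((F₂ a b).eval x) ^ 3) x := by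
  have key : (F₁ a b + 2 * X * derivative (F₁ a b)) * F₂ a b
      - 2 * X * F₁ a b * derivative (F₂ a b) = F₃ a b * F₄ a b := by
    apply Polynomial.funext
    intro x
    simp only [F₁, F₂, F₃, F₄, derivative_add, derivative_mul, derivative_C, derivative_X,
      derivative_pow, derivative_sub, eval_add, eval_sub, eval_mul, eval_pow, eval_C, eval_X,
      eval_ofNat, eval_one, derivative_ofNat, eval_zero]
    ring
  refine ⟨key, fun x hx => ?_⟩
  have hkey := congrArg (eval x) key
  simp only [eval_mul, eval_sub, eval_add, eval_ofNat, eval_X] at hkey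
  have hf : HasDerivAt (fun t : ℂ => (F₁ a b).eval t) ((derivative (F₁ a b)).eval x) x :=
    (F₁ a b).hasDerivAt x
  have hg : HasDerivAt (fun t : ℂ => (F₂ a b).eval t) ((derivative (F₂ a b)).eval x) x :=
    (F₂ a b).hasDerivAt x
  have hN : HasDerivAt (fun t : ℂ => t * ((F₁ a b).eval t) ^ 2)
      (1 * ((F₁ a b).eval x) ^ 2 + x * (2 * (F₁ a b).eval x ^ 1 * (derivative (F₁ a b)).eval x)) x :=
    (hasDerivAt_id x).mul (hf.pow 2)
  have hD : HasDerivAt (fun t : ℂ => ((F₂ a b).eval t) ^ 2)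
      (2 * (F₂ a b).eval x ^ 1 * (derivative (F₂ a b)).eval x) x := hg.pow 2
  have hD0 : ((F₂ a b).eval x) ^ 2 ≠ 0 := pow_ne_zero _ hx
  have := hN.div hD hD0
  convert this using 1
  · rfl
  · rfl
  · rfl
  rw [mul_assoc, ← hkey]
  field_simp
end

section
/- Let a, b, z ∈ ℂ and suppose F₄(z) = 0, where F₄(X) = (2a+1)X² + (2b − 2ab − 2a − a²)X + b² + 2ab. Then (X − z)² divides the polynomial G(X) = X·F₁(X)²·F₂(z)² − z·F₁(z)²·F₂(X)² in ℂ[X], where F₁(X) = X² + (2a + 2b + a²)X + 2ab + b² and F₂(X) = (2a+1)X² + (a² + 2ab + 2b)X + b². -/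
open Polynomial

/-- Let `a, b, z ∈ ℂ` with `F₄(z) = 0`, where
`F₄(X) = (2a+1)X² + (2b − 2ab − 2a − a²)X + b² + 2ab`.  Then `(X − z)²` divides the
polynomial `G(X) = X·F₁(X)²·F₂(z)² − z·F₁(z)²·F₂(X)²` in `ℂ[X]`. -/
theorem sq_dvd_numerator (a b z : ℂ)
    (hF4 : (2 * a + 1) * z ^ 2 + (2 * b - 2 * a * b - 2 * a - a ^ 2) * z
        + b ^ 2 + 2 * a * b = 0) :
    (X - C z) ^ 2 ∣
      X * (F₁ a b) ^ 2 * C (((F₂ a b).eval z) ^ 2)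
        - C z * C (((F₁ a b).eval z) ^ 2) * (F₂ a b) ^ 2 := by
  set G : Polynomial ℂ :=
      X * (F₁ a b) ^ 2 * C (((F₂ a b).eval z) ^ 2)
        - C z * C (((F₁ a b).eval z) ^ 2) * (F₂ a b) ^ 2 with hGdef
  by_cases hG : G = 0
  · rw [hG]; exact dvd_zero _
  · rw [← Polynomial.le_rootMultiplicity_iff hG]
    have h2 : (1 : ℕ) < G.rootMultiplicity z := by
      rw [Polynomial.one_lt_rootMultiplicity_iff_isRoot hG]
      constructor
      · simp only [Polynomial.IsRoot, hGdef, Polynomial.eval_sub, Polynomial.eval_mul,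
          Polynomial.eval_pow, Polynomial.eval_X, Polynomial.eval_C]
        ring
      · simp only [Polynomial.IsRoot, hGdef, F₁, F₂, derivative_sub, derivative_add, derivative_mul, derivative_C,
          derivative_X, derivative_pow, derivative_X_pow, derivative_C_mul, Polynomial.eval_add, Polynomial.eval_sub,
          Polynomial.eval_mul, Polynomial.eval_pow, Polynomial.eval_X, Polynomial.eval_C,
          Polynomial.eval_zero, Polynomial.eval_one]
        linear_combination (1 * z ^ 6 + 6 * b ^ 1 * z ^ 5 + 15 * b ^ 2 * z ^ 4 +
          20 * b ^ 3 * z ^ 3 + 15 * b ^ 4 * z ^ 2 + 6 * b ^ 5 * z ^ 1 + 1 * b ^ 6 +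
          2 * a ^ 1 * z ^ 5 + 2 * a ^ 1 * z ^ 6 + 10 * a ^ 1 * b ^ 1 * z ^ 4 +
          10 * a ^ 1 * b ^ 1 * z ^ 5 + 20 * a ^ 1 * b ^ 2 * z ^ 3 + 20 * a ^ 1 * b ^ 2 * z ^ 4 +
          20 * a ^ 1 * b ^ 3 * z ^ 2 + 20 * a ^ 1 * b ^ 3 * z ^ 3 + 10 * a ^ 1 * b ^ 4 * z ^ 1 +
          10 * a ^ 1 * b ^ 4 * z ^ 2 + 2 * a ^ 1 * b ^ 5 + 2 * a ^ 1 * b ^ 5 * z ^ 1 +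
          5 * a ^ 2 * z ^ 5 + 20 * a ^ 2 * b ^ 1 * z ^ 4 + 30 * a ^ 2 * b ^ 2 * z ^ 3 +
          20 * a ^ 2 * b ^ 3 * z ^ 2 + 5 * a ^ 2 * b ^ 4 * z ^ 1 + -5 * a ^ 4 * z ^ 4 +
          -10 * a ^ 4 * b ^ 1 * z ^ 3 + -5 * a ^ 4 * b ^ 2 * z ^ 2 + -2 * a ^ 5 * z ^ 3 +
          -2 * a ^ 5 * z ^ 4 + -2 * a ^ 5 * b ^ 1 * z ^ 2 + -2 * a ^ 5 * b ^ 1 * z ^ 3 +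
          -1 * a ^ 6 * z ^ 3) * hF4
    omega
end

section
/- Let a ∈ ℂ with a(a − 2) ≠ 0, 2a + 1 ≠ 0, 3a − 1 ≠ 0, a ≠ 1, a + 8 ≠ 0, and set λ = (3a − 1)³(a + 8)²(a − 1)/(27a(a − 2)⁵) and T = (a/(a − 2))². Assume λ ≠ 0 and λ ≠ 1. Then the j-invariant of the elliptic curve in Weierstrass form y² = x(x − 1)(x − λ) over ℂ (i.e., the Weierstrass curve with coefficients a₁ = 0, a₂ = −(λ + 1), a₃ = 0, a₄ = λ, a₆ = 0) equals (9765625T⁶ − 23437500T⁵ + 19218750T⁴ − 6087500T³ + 560625T² + 166368T + 256)³ / (729·T·(T − 1)²·(25T − 16)⁴·(25T − 1)⁶). -/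
set_option maxHeartbeats 1000000

/-- The Legendre-form Weierstrass curve `y² = x(x − 1)(x − λ)`, i.e. the Weierstrass curve
with coefficients `a₁ = 0`, `a₂ = −(λ + 1)`, `a₃ = 0`, `a₄ = λ`, `a₆ = 0`. -/
def legendreCurve (lam : ℂ) : WeierstrassCurve ℂ :=
  ⟨0, -(lam + 1), 0, lam, 0⟩

lemma legendre_j (lam : ℂ) (hl0 : lam ≠ 0) (hl1 : lam ≠ 1) :
    (legendreCurve lam).c₄ ^ 3 / (legendreCurve lam).Δ
      = 256 * (lam ^ 2 - lam + 1) ^ 3 / (lam ^ 2 * (lam - 1) ^ 2) := by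
  have h1 : lam - 1 ≠ 0 := sub_ne_zero.mpr hl1
  have hc : (legendreCurve lam).c₄ = 16 * (lam ^ 2 - lam + 1) := by
    simp only [legendreCurve, WeierstrassCurve.c₄, WeierstrassCurve.b₂, WeierstrassCurve.b₄]
    ring
  have hD : (legendreCurve lam).Δ = 16 * (lam ^ 2 * (lam - 1) ^ 2) := by
    simp only [legendreCurve, WeierstrassCurve.Δ, WeierstrassCurve.b₂, WeierstrassCurve.b₄,
      WeierstrassCurve.b₆, WeierstrassCurve.b₈]
    ring
  rw [hc, hD, div_eq_div_iff (by simp [hl0, h1]) (by simp [hl0, h1])]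
  ring

lemma aux_j (p q r s t u v w y z : ℂ) (hp : p ≠ 0) (hq : q ≠ 0) (hr : r ≠ 0)
    (hs : s ≠ 0) (ht : t ≠ 0) (hu : u ≠ 0) (hv : v ≠ 0) (hw : w ≠ 0)
    (hy : y ≠ 0) (hz : z ≠ 0)
    (h : q ^ 2 * p ^ 2 * r ^ 2
        = 729 * s ^ 10 * t ^ 2 * u ^ 2 * v ^ 4 * w ^ 4 * y ^ 6 * z ^ 6) :
    256 * ((p / q) ^ 2 - p / q + 1) ^ 3 / ((p / q) ^ 2 * (r / q) ^ 2)
      = (256 * (p ^ 2 - p * q + q ^ 2) / s ^ 12) ^ 3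
        / (729 * (t ^ 2 / s ^ 2) * (4 * u / s ^ 2) ^ 2 * (v * w / s ^ 2) ^ 4
            * (4 * (y * z) / s ^ 2) ^ 6) := by
  have e1 : 256 * ((p / q) ^ 2 - p / q + 1) ^ 3 / ((p / q) ^ 2 * (r / q) ^ 2)
      = 256 * (p ^ 2 - p * q + q ^ 2) ^ 3 / (q ^ 2 * p ^ 2 * r ^ 2) := by
    field_simp
  have eD : 729 * (t ^ 2 / s ^ 2) * (4 * u / s ^ 2) ^ 2 * (v * w / s ^ 2) ^ 4
        * (4 * (y * z) / s ^ 2) ^ 6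
      = 47775744 * t ^ 2 * u ^ 2 * v ^ 4 * w ^ 4 * y ^ 6 * z ^ 6 / s ^ 26 := by
    have hss : s ^ 26 * s⁻¹ ^ 26 = 1 := by rw [← mul_pow, mul_inv_cancel₀ hs, one_pow]
    field_simp
    ring
  have eN : (256 * (p ^ 2 - p * q + q ^ 2) / s ^ 12) ^ 3
      = 16777216 * (p ^ 2 - p * q + q ^ 2) ^ 3 / s ^ 36 := by
    rw [div_pow]
    ring_nf
  rw [e1, h, eD, eN, div_div_div_comm]
  have e3 : (s : ℂ) ^ 36 / s ^ 26 = s ^ 10 := by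
    field_simp
  rw [e3, div_div]
  rw [div_eq_div_iff
    (mul_ne_zero (mul_ne_zero (mul_ne_zero (mul_ne_zero (mul_ne_zero (mul_ne_zero
      (mul_ne_zero (by norm_num) (pow_ne_zero _ hs)) (pow_ne_zero _ ht)) (pow_ne_zero _ hu))
      (pow_ne_zero _ hv)) (pow_ne_zero _ hw)) (pow_ne_zero _ hy)) (pow_ne_zero _ hz))
    (mul_ne_zero (mul_ne_zero (mul_ne_zero (mul_ne_zero (mul_ne_zero (mul_ne_zero
      (mul_ne_zero (by norm_num) (pow_ne_zero _ ht)) (pow_ne_zero _ hu)) (pow_ne_zero _ hv))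
      (pow_ne_zero _ hw)) (pow_ne_zero _ hy)) (pow_ne_zero _ hz)) (pow_ne_zero _ hs))]
  ring
lemma AN (s t x : ℂ) (hs : s ≠ 0)
    (h : 9765625 * t ^ 12 - 23437500 * t ^ 10 * s ^ 2 + 19218750 * t ^ 8 * s ^ 4
        - 6087500 * t ^ 6 * s ^ 6 + 560625 * t ^ 4 * s ^ 8 + 166368 * t ^ 2 * s ^ 10
        + 256 * s ^ 12 = 256 * x) :
    9765625 * ((t / s) ^ 2) ^ 6 - 23437500 * ((t / s) ^ 2) ^ 5 + 19218750 * ((t / s) ^ 2) ^ 4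
        - 6087500 * ((t / s) ^ 2) ^ 3 + 560625 * ((t / s) ^ 2) ^ 2 + 166368 * (t / s) ^ 2 + 256
      = 256 * x / s ^ 12 := by
  have h6 : ((t / s) ^ 2) ^ 6 * s ^ 12 = t ^ 12 := by field_simp
  have h5 : ((t / s) ^ 2) ^ 5 * s ^ 12 = t ^ 10 * s ^ 2 := by field_simp
  have h4 : ((t / s) ^ 2) ^ 4 * s ^ 12 = t ^ 8 * s ^ 4 := by field_simp
  have h3 : ((t / s) ^ 2) ^ 3 * s ^ 12 = t ^ 6 * s ^ 6 := by field_simp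
  have h2 : ((t / s) ^ 2) ^ 2 * s ^ 12 = t ^ 4 * s ^ 8 := by field_simp
  have h1 : (t / s) ^ 2 * s ^ 12 = t ^ 2 * s ^ 10 := by field_simp
  rw [eq_div_iff (pow_ne_zero 12 hs)]
  linear_combination h + 9765625 * h6 - 23437500 * h5 + 19218750 * h4 - 6087500 * h3
    + 560625 * h2 + 166368 * h1

lemma A2 (s t u : ℂ) (hs : s ≠ 0) (h : t ^ 2 - s ^ 2 = 4 * u) :
    (t / s) ^ 2 - 1 = 4 * u / s ^ 2 := by
  have h1 : (t / s) ^ 2 * s ^ 2 = t ^ 2 := by field_simp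
  rw [eq_div_iff (pow_ne_zero 2 hs)]
  linear_combination h + h1

lemma A3 (s t v w : ℂ) (hs : s ≠ 0) (h : 25 * t ^ 2 - 16 * s ^ 2 = v * w) :
    25 * (t / s) ^ 2 - 16 = v * w / s ^ 2 := by
  have h1 : (t / s) ^ 2 * s ^ 2 = t ^ 2 := by field_simp
  rw [eq_div_iff (pow_ne_zero 2 hs)]
  linear_combination h + 25 * h1

lemma A4 (s t y z : ℂ) (hs : s ≠ 0) (h : 25 * t ^ 2 - s ^ 2 = 4 * (y * z)) :
    25 * (t / s) ^ 2 - 1 = 4 * (y * z) / s ^ 2 := by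
  have h1 : (t / s) ^ 2 * s ^ 2 = t ^ 2 := by field_simp
  rw [eq_div_iff (pow_ne_zero 2 hs)]
  linear_combination h + 25 * h1

set_option maxHeartbeats 4000000 in
/-- In degenerate case II, with `λ = (3a − 1)³(a + 8)²(a − 1)/(27a(a − 2)⁵)` and
`T = (a/(a − 2))²`, the j-invariant `c₄³/Δ` of the elliptic curve
`y² = x(x − 1)(x − λ)` equals the stated rational function of `T`. -/
theorem caseII_j_invariant (a lam T : ℂ)
    (ha : a * (a - 2) ≠ 0) (h1 : 2 * a + 1 ≠ 0) (h2 : 3 * a - 1 ≠ 0)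
    (h3 : a ≠ 1) (h4 : a + 8 ≠ 0)
    (hlam : lam = (3 * a - 1) ^ 3 * (a + 8) ^ 2 * (a - 1) / (27 * a * (a - 2) ^ 5))
    (hT : T = (a / (a - 2)) ^ 2)
    (hl0 : lam ≠ 0) (hl1 : lam ≠ 1) :
    (legendreCurve lam).c₄ ^ 3 / (legendreCurve lam).Δ
      = (9765625 * T ^ 6 - 23437500 * T ^ 5 + 19218750 * T ^ 4 - 6087500 * T ^ 3
          + 560625 * T ^ 2 + 166368 * T + 256) ^ 3
        / (729 * T * (T - 1) ^ 2 * (25 * T - 16) ^ 4 * (25 * T - 1) ^ 6) := by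
  have ha0 : a ≠ 0 := fun h => ha (by simp [h])
  have ha2 : a - 2 ≠ 0 := fun h => ha (by simp [h])
  have ha1 : a - 1 ≠ 0 := sub_ne_zero.mpr h3
  have hQ : (27 : ℂ) * a * (a - 2) ^ 5 ≠ 0 :=
    mul_ne_zero (mul_ne_zero (by norm_num) ha0) (pow_ne_zero _ ha2)
  have hm : lam - 1 = (9 * a - 8) ^ 2 * (2 * a + 1) ^ 3 / (27 * a * (a - 2) ^ 5) := by
    rw [hlam]
    field_simp
    ring
  have h9 : 9 * a - 8 ≠ 0 := by
    intro h
    apply hl1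
    have h0 : lam - 1 = 0 := by rw [hm, h]; simp
    linear_combination h0
  have hP : (3 * a - 1) ^ 3 * (a + 8) ^ 2 * (a - 1) ≠ 0 :=
    mul_ne_zero (mul_ne_zero (pow_ne_zero _ h2) (pow_ne_zero _ h4)) ha1
  have hR : (9 * a - 8) ^ 2 * (2 * a + 1) ^ 3 ≠ 0 :=
    mul_ne_zero (pow_ne_zero _ h9) (pow_ne_zero _ h1)
  have hnum := AN (a - 2) a (((3 * a - 1) ^ 3 * (a + 8) ^ 2 * (a - 1)) ^ 2
      - (3 * a - 1) ^ 3 * (a + 8) ^ 2 * (a - 1) * (27 * a * (a - 2) ^ 5)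
      + (27 * a * (a - 2) ^ 5) ^ 2) ha2 (by ring)
  have hd2 := A2 (a - 2) a (a - 1) ha2 (by ring)
  have hd3 := A3 (a - 2) a (9 * a - 8) (a + 8) ha2 (by ring)
  have hd4 := A4 (a - 2) a (3 * a - 1) (2 * a + 1) ha2 (by ring)
  have hd1 : (a / (a - 2)) ^ 2 = a ^ 2 / (a - 2) ^ 2 := div_pow a (a - 2) 2
  rw [legendre_j lam hl0 hl1, hm, hlam, hT, hnum, hd2, hd3, hd4, hd1]
  exact aux_j ((3 * a - 1) ^ 3 * (a + 8) ^ 2 * (a - 1)) (27 * a * (a - 2) ^ 5)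
    ((9 * a - 8) ^ 2 * (2 * a + 1) ^ 3) (a - 2) a (a - 1) (9 * a - 8) (a + 8)
    (3 * a - 1) (2 * a + 1) hP hQ hR ha2 ha0 ha1 h9 h4 h2 h1 (by ring)
end
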